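/- Let G be a looped-(2,2) graph with n vertices, m edges and c loops, and let G′ be obtained from G by adding one additional loop to some vertex. Then the set of data (d, n, s) ∈ (ℝ²)^m × (ℝ²)^{c+1} × ℝ^{c+1} for which the realization system S(G′, d, n, s) has a solution is contained in the zero set of a nonzero polynomial in the entries of (d, n, s); consequently, the set of (d, n, s) for which S(G′, d, n, s) has no solution contains an open dense subset of ℝ^{2m+3(c+1)}. -/

import Mathlib

/-!
STATEMENT 16: adding a loop to a looped-(2,2) graph gives a generically unsolvable
direction-slider system.
Let G be a looped-(2,2) graph and G′ be obtained from G by adding one loop.  Then the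
set of data (d,n,s) for which S(G′,d,n,s) has a solution is contained in the zero set of
a nonzero polynomial; consequently the set of (d,n,s) for which S(G′,d,n,s) has no
solution contains an open dense subset.
-/

open MvPolynomial

/-- A looped graph. -/
structure LGraph (V E L : Type) where
  ends : E → V × V
  ne : ∀ e, (ends e).1 ≠ (ends e).2
  loopAt : L → V

namespace LGraph

variable {V E L : Type}

noncomputable def edgeCount (G : LGraph V E L) (S : Finset V) : ℕ :=
  Nat.card {e : E // (G.ends e).1 ∈ S ∧ (G.ends e).2 ∈ S}

noncomputable def loopCount (G : LGraph V E L) (S : Finset V) : ℕ :=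
  Nat.card {l : L // G.loopAt l ∈ S}

/-- A looped-(2,2) graph: `(2,0,2)`-graded-sparse with `m + c = 2n`. -/
def IsLooped22 (G : LGraph V E L) [Fintype V] [Fintype E] [Fintype L] : Prop :=
  (∀ S : Finset V, G.edgeCount S ≤ 2 * S.card - 2) ∧
  (∀ S : Finset V, G.edgeCount S + G.loopCount S ≤ 2 * S.card) ∧
  Fintype.card E + Fintype.card L = 2 * Fintype.card V

/-- The graph obtained from `G` by adding one extra loop on the vertex `v0`; the new
loop is indexed by `none`. -/
def addLoop (G : LGraph V E L) (v0 : V) : LGraph V E (Option L) where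
  ends := G.ends
  ne := G.ne
  loopAt l := l.elim v0 G.loopAt

end LGraph

/-- `⟨w, d^⊥⟩` where `d^⊥ = (−d.2, d.1)`. -/
def pcross (d w : ℝ × ℝ) : ℝ := d.1 * w.2 - d.2 * w.1

/-- The usual inner product on ℝ². -/
def pdot (a b : ℝ × ℝ) : ℝ := a.1 * b.1 + a.2 * b.2

/-- `p` is a solution of the realization system `S(G,d,n,s)`. -/
def IsSSol {V E L : Type} (G : LGraph V E L) (d : E → ℝ × ℝ) (nrm : L → ℝ × ℝ)
    (s : L → ℝ) (p : V → ℝ × ℝ) : Prop :=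
  (∀ e, pcross (d e) (p (G.ends e).1 - p (G.ends e).2) = 0) ∧
  (∀ l, pdot (p (G.loopAt l)) (nrm l) = s l)

/-- The coordinates of the data `(d, n, s)`. -/
def sliderCoords {E L : Type} (x : (E → ℝ × ℝ) × (L → ℝ × ℝ) × (L → ℝ)) :
    (E ⊕ E) ⊕ (L ⊕ L) ⊕ L → ℝ :=
  Sum.elim (Sum.elim (fun e => (x.1 e).1) (fun e => (x.1 e).2))
    (Sum.elim (Sum.elim (fun l => (x.2.1 l).1) (fun l => (x.2.1 l).2)) (fun l => x.2.2 l))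


open Module Submodule

lemma rado_aux {M : Type*} [AddCommGroup M] [Module ℝ M] [FiniteDimensional ℝ M]
    {ι : Type*} [Fintype ι] :
    ∀ (N : ℕ) (W : ι → Submodule ℝ M), (∑ i, finrank ℝ (W i)) = N →
    (∀ i, finrank ℝ (W i) ≤ 2) →
    (∀ X : Finset ι, X.card ≤ finrank ℝ ((⨆ i ∈ X, W i : Submodule ℝ M))) →
    ∃ v : ι → M, (∀ i, v i ∈ W i) ∧ LinearIndependent ℝ v := by
  classical
  intro N
  induction N using Nat.strong_induction_on with
  | _ N IH =>
  intro W hN hd hall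
  by_cases hbig : ∃ t, 2 ≤ finrank ℝ (W t)
  · obtain ⟨t, ht⟩ := hbig
    have ht2 : finrank ℝ (W t) = 2 := le_antisymm (hd t) ht
    -- get two independent vectors u w in W t
    obtain ⟨u, w, hu, hw, huw, hspan⟩ :
        ∃ u w : M, u ∈ W t ∧ w ∈ W t ∧ LinearIndependent ℝ ![u, w] ∧
          span ℝ {u, w} = W t := by
      have b := finBasis ℝ (W t)
      rw [ht2] at b
      have hbi : LinearIndependent ℝ (fun i : Fin 2 => ((b i : M))) :=
        b.linearIndependent.map' (W t).subtype (ker_subtype _)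
      refine ⟨b 0, b 1, (b 0).2, (b 1).2, ?_, ?_⟩
      · have : (![((b 0 : M)), (b 1 : M)] : Fin 2 → M) = fun i => ((b i : M)) := by
          funext i; fin_cases i <;> rfl
        rw [this]; exact hbi
      · have h1 : span ℝ {(b 0 : M), (b 1 : M)} ≤ W t := by
          rw [span_le]; rintro x (rfl | rfl) <;> simp [(b 0).2, (b 1).2]
        refine Submodule.eq_of_le_of_finrank_le h1 ?_
        rw [ht2]
        have hset : ({(b 0 : M), (b 1 : M)} : Set M)
            = Set.range (fun i : Fin 2 => (b i : M)) := by
          ext x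
          constructor
          · rintro (rfl | rfl)
            exacts [⟨0, rfl⟩, ⟨1, rfl⟩]
          · rintro ⟨i, rfl⟩
            fin_cases i
            · exact Or.inl rfl
            · exact Or.inr rfl
        rw [hset, finrank_span_eq_card hbi]
        simp
    have hune : u ≠ 0 := huw.ne_zero 0
    have hwne : w ≠ 0 := by
      have := huw.ne_zero 1; simpa using this
    -- the two candidate replacements
    set W1 : ι → Submodule ℝ M := Function.update W t (span ℝ {u}) with hW1
    set W2 : ι → Submodule ℝ M := Function.update W t (span ℝ {w}) with hW2
    have key : ∀ (z : M), z ≠ 0 → z ∈ W t →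
        (∀ X : Finset ι, X.card ≤ finrank ℝ
          ((⨆ i ∈ X, Function.update W t (span ℝ {z}) i : Submodule ℝ M))) →
        ∃ v : ι → M, (∀ i, v i ∈ W i) ∧ LinearIndependent ℝ v := by
      intro z hzne hzW hallz
      set Wz := Function.update W t (span ℝ {z}) with hWz
      have hsplit : ∀ (Wht : ι → Submodule ℝ M), ∑ i, finrank ℝ (Wht i)
          = (∑ i ∈ Finset.univ.erase t, finrank ℝ (Wht i)) + finrank ℝ (Wht t) := by
        intro Wht
        rw [Finset.sum_erase_add _ _ (Finset.mem_univ t)]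
      have hagree : ∑ i ∈ Finset.univ.erase t, finrank ℝ (Wz i)
          = ∑ i ∈ Finset.univ.erase t, finrank ℝ (W i) := by
        refine Finset.sum_congr rfl fun i hi => ?_
        rw [hWz, Function.update_of_ne (Finset.ne_of_mem_erase hi)]
      have hsum : ∑ i, finrank ℝ (Wz i) + 1 = N := by
        rw [hsplit Wz, hagree]
        rw [← hN, hsplit W]
        have : finrank ℝ (Wz t) = 1 := by
          rw [hWz, Function.update_self, finrank_span_singleton hzne]
        rw [this, ht2]
      obtain ⟨v, hv1, hv2⟩ := IH (∑ i, finrank ℝ (Wz i)) (by omega) Wz rfl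
        (by
          intro i
          rcases eq_or_ne i t with rfl | hne
          · rw [hWz, Function.update_self, finrank_span_singleton hzne]; omega
          · rw [hWz, Function.update_of_ne hne]; exact hd i)
        hallz
      refine ⟨v, fun i => ?_, hv2⟩
      rcases eq_or_ne i t with rfl | hne
      · have := hv1 i
        rw [hWz, Function.update_self] at this
        exact (span_le.2 (by simpa using hzW)) this
      · have := hv1 i
        rwa [hWz, Function.update_of_ne hne] at this
    by_cases h1 : ∀ X : Finset ι, X.card ≤ finrank ℝ ((⨆ i ∈ X, W1 i : Submodule ℝ M))
    · exact key u hune hu h1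
    by_cases h2 : ∀ X : Finset ι, X.card ≤ finrank ℝ ((⨆ i ∈ X, W2 i : Submodule ℝ M))
    · exact key w hwne hw h2
    · -- double failure: contradiction
      exfalso
      push_neg at h1 h2
      obtain ⟨X1, hX1⟩ := h1
      obtain ⟨X2, hX2⟩ := h2
      have ht1 : t ∈ X1 := by
        by_contra htn
        have : (⨆ i ∈ X1, W1 i : Submodule ℝ M) = ⨆ i ∈ X1, W i := by
          refine iSup_congr fun i => ?_
          rcases eq_or_ne i t with rfl | hne
          · simp [htn]
          · rw [hW1, Function.update_of_ne hne]
        rw [this] at hX1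
        exact absurd (hall X1) (by omega)
      have ht2' : t ∈ X2 := by
        by_contra htn
        have : (⨆ i ∈ X2, W2 i : Submodule ℝ M) = ⨆ i ∈ X2, W i := by
          refine iSup_congr fun i => ?_
          rcases eq_or_ne i t with rfl | hne
          · simp [htn]
          · rw [hW2, Function.update_of_ne hne]
        rw [this] at hX2
        exact absurd (hall X2) (by omega)
      set A : Submodule ℝ M := ⨆ i ∈ X1.erase t, W i with hA
      set B : Submodule ℝ M := ⨆ i ∈ X2.erase t, W i with hB
      have supCongr : ∀ (X : Finset ι) (Z : Submodule ℝ M),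
          (⨆ i ∈ X.erase t, Function.update W t Z i : Submodule ℝ M)
            = ⨆ i ∈ X.erase t, W i := by
        intro X Z
        refine iSup_congr fun i => ?_
        rcases eq_or_ne i t with rfl | hne
        · simp
        · rw [Function.update_of_ne hne]
      have eq1 : (⨆ i ∈ X1, W1 i : Submodule ℝ M) = span ℝ {u} ⊔ A := by
        conv_lhs => rw [← Finset.insert_erase ht1]
        rw [Finset.iSup_insert, hW1, Function.update_self, supCongr]
      have eq2 : (⨆ i ∈ X2, W2 i : Submodule ℝ M) = span ℝ {w} ⊔ B := by
        conv_lhs => rw [← Finset.insert_erase ht2']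
        rw [Finset.iSup_insert, hW2, Function.update_self, supCongr]
      rw [eq1] at hX1
      rw [eq2] at hX2
      have hcard1 : (X1.erase t).card + 1 = X1.card := Finset.card_erase_add_one ht1
      have hcard2 : (X2.erase t).card + 1 = X2.card := Finset.card_erase_add_one ht2'
      have hA1 : finrank ℝ A ≥ (X1.erase t).card := hall _
      have hB1 : finrank ℝ B ≥ (X2.erase t).card := hall _
      have hfr1 : finrank ℝ (span ℝ {u} ⊔ A : Submodule ℝ M) ≤ finrank ℝ A := by omega
      have hfr2 : finrank ℝ (span ℝ {w} ⊔ B : Submodule ℝ M) ≤ finrank ℝ B := by omega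
      have hAeq : A = span ℝ {u} ⊔ A :=
        Submodule.eq_of_le_of_finrank_le le_sup_right hfr1
      have hBeq : B = span ℝ {w} ⊔ B :=
        Submodule.eq_of_le_of_finrank_le le_sup_right hfr2
      have huA : u ∈ A := by
        rw [hAeq]; exact Submodule.mem_sup_left (mem_span_singleton_self u)
      have hwB : w ∈ B := by
        rw [hBeq]; exact Submodule.mem_sup_left (mem_span_singleton_self w)
      have hfA := congrArg (fun (S : Submodule ℝ M) => finrank ℝ S) hAeq
      have hfB := congrArg (fun (S : Submodule ℝ M) => finrank ℝ S) hBeq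
      -- Hall on the union
      set Y := X1 ∪ X2 with hY
      have htY : t ∈ Y := Finset.mem_union_left _ ht1
      have hWtle : W t ≤ A ⊔ B := by
        rw [← hspan, span_le]
        rintro x (rfl | rfl)
        · exact Submodule.mem_sup_left huA
        · exact Submodule.mem_sup_right hwB
      have supY : (⨆ i ∈ Y, W i : Submodule ℝ M) = A ⊔ B := by
        conv_lhs => rw [← Finset.insert_erase htY]
        rw [Finset.iSup_insert]
        have : Y.erase t = X1.erase t ∪ X2.erase t := Finset.erase_union_distrib _ _ _
        rw [this, Finset.iSup_union, ← hA, ← hB]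
        exact sup_eq_right.mpr hWtle
      have hYcard : Y.card ≤ finrank ℝ (A ⊔ B : Submodule ℝ M) := by
        have := hall Y; rwa [supY] at this
      have hsub : finrank ℝ (A ⊔ B : Submodule ℝ M) + finrank ℝ (A ⊓ B : Submodule ℝ M)
          = finrank ℝ A + finrank ℝ B :=
        Submodule.finrank_sup_add_finrank_inf_eq A B
      have hint : ((X1 ∩ X2).erase t).card ≤ finrank ℝ (A ⊓ B : Submodule ℝ M) := by
        refine le_trans (hall _) (Submodule.finrank_mono (le_inf ?_ ?_))
        · exact biSup_mono fun i hi => Finset.erase_subset_erase t (Finset.inter_subset_left) hi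
        · exact biSup_mono fun i hi => Finset.erase_subset_erase t (Finset.inter_subset_right) hi
      have hcount : (Y.erase t).card + ((X1 ∩ X2).erase t).card
          = (X1.erase t).card + (X2.erase t).card := by
        have h3 : Y.erase t = X1.erase t ∪ X2.erase t := Finset.erase_union_distrib _ _ _
        have h4 : (X1 ∩ X2).erase t = (X1.erase t) ∩ (X2.erase t) := by
          ext x; simp [Finset.mem_erase, Finset.mem_inter]; tauto
        rw [h3, h4]
        exact Finset.card_union_add_card_inter _ _
      have hcardY : (Y.erase t).card + 1 = Y.card := Finset.card_erase_add_one htY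
      omega
  · -- all dims ≤ 1
    push_neg at hbig
    have hdim1 : ∀ i, finrank ℝ (W i) = 1 := by
      intro i
      have h1 : 1 ≤ finrank ℝ (W i) := by
        have := hall {i}
        simpa using this
      have := hbig i
      omega
    have hvex : ∀ i, ∃ v : M, v ∈ W i ∧ v ≠ 0 ∧ span ℝ {v} = W i := by
      intro i
      have hne : W i ≠ ⊥ := by
        intro hbot
        have := hdim1 i
        rw [hbot] at this
        simp at this
      obtain ⟨v, hv, hvne⟩ := Submodule.exists_mem_ne_zero_of_ne_bot hne
      refine ⟨v, hv, hvne, ?_⟩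
      refine Submodule.eq_of_le_of_finrank_le ((span_singleton_le_iff_mem _ _).2 hv) ?_
      rw [hdim1 i, finrank_span_singleton hvne]
    choose v hvW hvne hvspan using hvex
    refine ⟨v, hvW, ?_⟩
    rw [linearIndependent_iff']
    intro s g hsum j hj
    by_contra hgj
    -- v j in span of the others
    set K : Submodule ℝ M := span ℝ ((s.erase j).image v : Finset M) with hK
    have hmemK : ∀ i ∈ s.erase j, v i ∈ K := by
      intro i hi
      exact subset_span (Finset.mem_coe.2 (Finset.mem_image.2 ⟨i, hi, rfl⟩))
    have hvjK : v j ∈ K := by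
      have hsplit : g j • v j + ∑ i ∈ s.erase j, g i • v i = 0 := by
        rw [← Finset.add_sum_erase _ _ hj] at hsum
        exact hsum
      have hneg : g j • v j = - ∑ i ∈ s.erase j, g i • v i := by
        rw [eq_neg_iff_add_eq_zero]; exact hsplit
      have hvj : v j = (g j)⁻¹ • (- ∑ i ∈ s.erase j, g i • v i) := by
        rw [← hneg, inv_smul_smul₀ hgj]
      rw [hvj]
      exact K.smul_mem _ (Submodule.neg_mem _
        (Submodule.sum_mem _ fun i hi => K.smul_mem _ (hmemK i hi)))
    have hle : (⨆ i ∈ s, W i : Submodule ℝ M) ≤ K := by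
      refine iSup_le fun i => iSup_le fun hi => ?_
      rw [← hvspan i, span_le, Set.singleton_subset_iff]
      rcases eq_or_ne i j with rfl | hne
      · exact hvjK
      · exact hmemK i (Finset.mem_erase.2 ⟨hne, hi⟩)
    have hup : finrank ℝ K ≤ (s.erase j).card := by
      refine le_trans (finrank_span_finset_le_card _) (Finset.card_image_le)
    have := hall s
    have hmono := Submodule.finrank_mono hle
    have hcs : (s.erase j).card + 1 = s.card := Finset.card_erase_add_one hj
    omega

open Module Submodule

set_option linter.unusedSectionVars false
section HallSetup

variable {V E L : Type} [Fintype V] [Fintype E] [Fintype L]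

open scoped Classical

/-- The family of admissible row subspaces. -/
noncomputable def Wfam (G : LGraph V E L) : E ⊕ L → Submodule ℝ (V → ℝ × ℝ)
  | .inl e => LinearMap.range
      ((LinearMap.single ℝ (fun _ : V => ℝ × ℝ) (G.ends e).1)
        - (LinearMap.single ℝ (fun _ : V => ℝ × ℝ) (G.ends e).2))
  | .inr l => LinearMap.range (LinearMap.single ℝ (fun _ : V => ℝ × ℝ) (G.loopAt l))

/-- A looped graph; dummy to check defs compile -/
theorem Wfam_finrank_le (G : LGraph V E L) (t : E ⊕ L) : finrank ℝ (Wfam G t) ≤ 2 := by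
  have h2 : finrank ℝ (ℝ × ℝ) = 2 := by
    simp [Module.finrank_prod]
  cases t with
  | inl e =>
    calc finrank ℝ (Wfam G (.inl e)) ≤ finrank ℝ (ℝ × ℝ) := LinearMap.finrank_range_le _
    _ = 2 := h2
  | inr l =>
    calc finrank ℝ (Wfam G (.inr l)) ≤ finrank ℝ (ℝ × ℝ) := LinearMap.finrank_range_le _
    _ = 2 := h2

theorem single_sub_mem_Wfam (G : LGraph V E L) (e : E) (δ : ℝ × ℝ) :
    (Pi.single (G.ends e).1 δ - Pi.single (G.ends e).2 δ : V → ℝ × ℝ) ∈ Wfam G (.inl e) := by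
  exact ⟨δ, rfl⟩

theorem single_mem_Wfam (G : LGraph V E L) (l : L) (δ : ℝ × ℝ) :
    (Pi.single (G.loopAt l) δ : V → ℝ × ℝ) ∈ Wfam G (.inr l) :=
  ⟨δ, rfl⟩

variable (G : LGraph V E L) (X : Finset (E ⊕ L))

/-- Two vertices are related if some edge of `X` joins them. -/
def erel : V → V → Prop := fun a b =>
  ∃ e : E, Sum.inl e ∈ X ∧ (G.ends e = (a, b) ∨ G.ends e = (b, a))

noncomputable def vSetoid : Setoid V := Relation.EqvGen.setoid (erel G X)

noncomputable abbrev vQuot := Quotient (vSetoid G X)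

noncomputable instance : Fintype (vQuot G X) := Fintype.ofFinite _

/-- A class is looped if some loop of `X` sits on it. -/
def cLooped (c : vQuot G X) : Prop :=
  ∃ l : L, Sum.inr l ∈ X ∧ (⟦G.loopAt l⟧ : vQuot G X) = c

/-- Fiber of a class. -/
noncomputable def cFib (c : vQuot G X) : Finset V :=
  Finset.univ.filter (fun v => (⟦v⟧ : vQuot G X) = c)

/-- The fiberwise-sum linear map whose kernel is inside the span of the rows. -/
noncomputable def Psi :
    (V → ℝ × ℝ) →ₗ[ℝ] ({c : vQuot G X // ¬ cLooped G X c} → ℝ × ℝ) :=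
  LinearMap.pi (fun c => ∑ v ∈ cFib G X c.1, LinearMap.proj v)

theorem erel_eqvGen_of_quot_eq {a b : V} (h : (⟦a⟧ : vQuot G X) = ⟦b⟧) :
    Relation.EqvGen (erel G X) a b := Quotient.eq''.mp h

theorem single_sub_mem_D {a b : V} (h : Relation.EqvGen (erel G X) a b) (δ : ℝ × ℝ) :
    (Pi.single a δ - Pi.single b δ : V → ℝ × ℝ) ∈ (⨆ t ∈ X, Wfam G t : Submodule ℝ _) := by
  induction h with
  | rel a b hr =>
    obtain ⟨e, he, hends⟩ := hr
    have hle : Wfam G (.inl e) ≤ (⨆ t ∈ X, Wfam G t : Submodule ℝ _) :=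
      le_iSup₂ (f := fun t (_ : t ∈ X) => Wfam G t) (Sum.inl e) he
    rcases hends with h1 | h1
    · have := single_sub_mem_Wfam G e δ
      rw [h1] at this
      exact hle this
    · have := single_sub_mem_Wfam G e (-δ)
      rw [h1] at this
      simp only [Pi.single_neg] at this
      have h2 : (-Pi.single b δ - -Pi.single a δ : V → ℝ × ℝ)
          = Pi.single a δ - Pi.single b δ := by abel
      rw [h2] at this
      exact hle this
  | refl a => simp
  | symm a b _ ih =>
    have : (Pi.single b δ - Pi.single a δ : V → ℝ × ℝ)
        = -(Pi.single a δ - Pi.single b δ) := by abel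
    rw [this]; exact neg_mem ih
  | trans a b c _ _ ih1 ih2 =>
    have : (Pi.single a δ - Pi.single c δ : V → ℝ × ℝ)
        = (Pi.single a δ - Pi.single b δ) + (Pi.single b δ - Pi.single c δ) := by abel
    rw [this]; exact add_mem ih1 ih2

theorem single_mem_D {u : V} {l : L} (hl : Sum.inr l ∈ X)
    (h : Relation.EqvGen (erel G X) u (G.loopAt l)) (δ : ℝ × ℝ) :
    (Pi.single u δ : V → ℝ × ℝ) ∈ (⨆ t ∈ X, Wfam G t : Submodule ℝ _) := by
  have hle : Wfam G (.inr l) ≤ (⨆ t ∈ X, Wfam G t : Submodule ℝ _) :=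
    le_iSup₂ (f := fun t (_ : t ∈ X) => Wfam G t) (Sum.inr l) hl
  have h2 : (Pi.single u δ : V → ℝ × ℝ)
      = (Pi.single u δ - Pi.single (G.loopAt l) δ) + Pi.single (G.loopAt l) δ := by abel
  rw [h2]
  exact add_mem (single_sub_mem_D G X h δ) (hle (single_mem_Wfam G l δ))

theorem ker_Psi_le : LinearMap.ker (Psi G X) ≤ (⨆ t ∈ X, Wfam G t : Submodule ℝ _) := by
  intro q hq
  have hq' : ∀ c : vQuot G X, ¬ cLooped G X c → ∑ v ∈ cFib G X c, q v = 0 := by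
    intro c hc
    have := congrFun (LinearMap.mem_ker.mp hq) ⟨c, hc⟩
    simpa [Psi, LinearMap.pi_apply, LinearMap.sum_apply, LinearMap.proj_apply] using this
  have hdec : q = (∑ v : V, (Pi.single v (q v) - Pi.single (Quotient.out (⟦v⟧ : vQuot G X)) (q v)))
      + ∑ v : V, (Pi.single (Quotient.out (⟦v⟧ : vQuot G X)) (q v) : V → ℝ × ℝ) := by
    rw [Finset.sum_sub_distrib]
    rw [Finset.univ_sum_single]
    abel
  rw [hdec]
  refine add_mem (sum_mem fun v _ => ?_) ?_
  · refine single_sub_mem_D G X ?_ _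
    refine erel_eqvGen_of_quot_eq G X ?_
    rw [Quotient.out_eq]
  · -- group by class
    have hgrp : ∑ v : V, (Pi.single (Quotient.out (⟦v⟧ : vQuot G X)) (q v) : V → ℝ × ℝ)
        = ∑ c : vQuot G X, ∑ v ∈ cFib G X c,
            (Pi.single (Quotient.out c) (q v) : V → ℝ × ℝ) := by
      rw [← Finset.sum_fiberwise Finset.univ (fun v => (⟦v⟧ : vQuot G X))
        (fun v => (Pi.single (Quotient.out (⟦v⟧ : vQuot G X)) (q v) : V → ℝ × ℝ))]
      refine Finset.sum_congr rfl fun c _ => Finset.sum_congr rfl fun v hv => ?_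
      have : (⟦v⟧ : vQuot G X) = c := by
        simpa [cFib] using hv
      rw [this]
    rw [hgrp]
    refine sum_mem fun c _ => ?_
    have hsingle : ∑ v ∈ cFib G X c, (Pi.single (Quotient.out c) (q v) : V → ℝ × ℝ)
        = (Pi.single (Quotient.out c) (∑ v ∈ cFib G X c, q v) : V → ℝ × ℝ) := by
      exact (map_sum (LinearMap.single ℝ (fun _ : V => ℝ × ℝ) (Quotient.out c)) q
        (cFib G X c)).symm
    rw [hsingle]
    by_cases hc : cLooped G X c
    · obtain ⟨l, hl, hql⟩ := hc
      refine single_mem_D G X hl ?_ _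
      refine erel_eqvGen_of_quot_eq G X ?_
      rw [hql, Quotient.out_eq]
    · rw [hq' c hc]
      simp

end HallSetup

section HallMain

variable {V E L : Type} [Fintype V] [Fintype E] [Fintype L]

open scoped Classical

theorem finrank_pi_prod (ι : Type) [Fintype ι] :
    finrank ℝ (ι → ℝ × ℝ) = 2 * Fintype.card ι := by
  rw [Module.finrank_pi_fintype]
  have : finrank ℝ (ℝ × ℝ) = 2 := by simp [Module.finrank_prod]
  simp [this, Finset.sum_const, mul_comm]

/-- The fundamental counting bound. -/
theorem hall_Wfam (G : LGraph V E L)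
    (hs1 : ∀ S : Finset V, G.edgeCount S ≤ 2 * S.card - 2)
    (hs2 : ∀ S : Finset V, G.edgeCount S + G.loopCount S ≤ 2 * S.card)
    (X : Finset (E ⊕ L)) :
    X.card ≤ finrank ℝ ((⨆ t ∈ X, Wfam G t : Submodule ℝ (V → ℝ × ℝ))) := by
  -- the class of an element
  set cls : E ⊕ L → vQuot G X := fun t =>
    Sum.elim (fun e => (⟦(G.ends e).1⟧ : vQuot G X)) (fun l => (⟦G.loopAt l⟧ : vQuot G X)) t
    with hcls
  -- counting the fibers
  have hXcard : X.card = ∑ c : vQuot G X, (X.filter (fun t => cls t = c)).card :=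
    Finset.card_eq_sum_card_fiberwise (fun t _ => Finset.mem_univ (cls t))
  have hVcard : Fintype.card V = ∑ c : vQuot G X, (cFib G X c).card := by
    have := Finset.card_eq_sum_card_fiberwise
      (f := fun v : V => (⟦v⟧ : vQuot G X)) (s := Finset.univ) (t := Finset.univ)
      (fun v _ => Finset.mem_univ _)
    simpa [cFib, Finset.card_univ] using this
  -- per-class bound
  have hclass : ∀ c : vQuot G X,
      (X.filter (fun t => cls t = c)).card + (if cLooped G X c then 0 else 2)
        ≤ 2 * (cFib G X c).card := by
    intro c
    set S : Finset V := cFib G X c with hS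
    have hfibne : Quotient.out c ∈ S := by
      simp [hS, cFib]
    have hSne : 1 ≤ S.card := Finset.card_pos.mpr ⟨_, hfibne⟩
    set A : Finset E := Finset.univ.filter (fun e => (G.ends e).1 ∈ S ∧ (G.ends e).2 ∈ S)
      with hA
    set B : Finset L := Finset.univ.filter (fun l => G.loopAt l ∈ S) with hB
    have hAcard : A.card = G.edgeCount S := by
      rw [LGraph.edgeCount, Nat.card_eq_fintype_card, Fintype.card_subtype]
    have hBcard : B.card = G.loopCount S := by
      rw [LGraph.loopCount, Nat.card_eq_fintype_card, Fintype.card_subtype]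
    -- both endpoints of an edge of the fiber lie in the fiber
    have hedge : ∀ e : E, Sum.inl e ∈ X → cls (Sum.inl e) = c → e ∈ A := by
      intro e heX hecls
      have h12 : (⟦(G.ends e).1⟧ : vQuot G X) = ⟦(G.ends e).2⟧ := by
        apply Quotient.sound
        exact Relation.EqvGen.rel _ _ ⟨e, heX, Or.inl rfl⟩
      have h1 : (⟦(G.ends e).1⟧ : vQuot G X) = c := hecls
      rw [hA]
      simp only [Finset.mem_filter, Finset.mem_univ, true_and]
      constructor
      · simp [hS, cFib, h1]
      · simp [hS, cFib, ← h12, h1]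
    have hloop : ∀ l : L, Sum.inr l ∈ X → cls (Sum.inr l) = c → l ∈ B := by
      intro l hlX hlcls
      rw [hB]
      simp only [Finset.mem_filter, Finset.mem_univ, true_and]
      simp [hS, cFib]
      exact hlcls
    by_cases hc : cLooped G X c
    · -- bound by edges + loops
      have hsub : X.filter (fun t => cls t = c) ⊆ A.disjSum B := by
        intro t ht
        rw [Finset.mem_filter] at ht
        cases t with
        | inl e => exact Finset.inl_mem_disjSum.mpr (hedge e ht.1 ht.2)
        | inr l => exact Finset.inr_mem_disjSum.mpr (hloop l ht.1 ht.2)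
      have := Finset.card_le_card hsub
      rw [Finset.card_disjSum, hAcard, hBcard] at this
      have h2S := hs2 S
      simp only [hc, if_true]
      omega
    · -- no loops in the fiber
      have hsub : X.filter (fun t => cls t = c) ⊆ A.disjSum (∅ : Finset L) := by
        intro t ht
        rw [Finset.mem_filter] at ht
        cases t with
        | inl e => exact Finset.inl_mem_disjSum.mpr (hedge e ht.1 ht.2)
        | inr l =>
          exfalso
          exact hc ⟨l, ht.1, ht.2⟩
      have := Finset.card_le_card hsub
      rw [Finset.card_disjSum, hAcard, Finset.card_empty] at this
      have h1S := hs1 S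
      simp only [hc, if_false]
      omega
  -- summing
  have hq0 : ∑ c : vQuot G X, (if cLooped G X c then 0 else 2)
      = 2 * Fintype.card {c : vQuot G X // ¬ cLooped G X c} := by
    rw [Fintype.card_subtype, Finset.sum_ite]
    simp [Finset.sum_const, mul_comm]
  have hsumbound : X.card + 2 * Fintype.card {c : vQuot G X // ¬ cLooped G X c}
      ≤ 2 * Fintype.card V := by
    rw [hXcard, ← hq0, ← Finset.sum_add_distrib, hVcard, Finset.mul_sum]
    exact Finset.sum_le_sum fun c _ => hclass c
  -- linear algebra
  have hrn := LinearMap.finrank_range_add_finrank_ker (Psi G X)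
  rw [finrank_pi_prod V] at hrn
  have hrange : finrank ℝ (LinearMap.range (Psi G X))
      ≤ 2 * Fintype.card {c : vQuot G X // ¬ cLooped G X c} := by
    refine le_trans (Submodule.finrank_le _) ?_
    rw [finrank_pi_prod]
  have hker := Submodule.finrank_mono (ker_Psi_le G X)
  omega

end HallMain

section Realize

variable {V E L : Type} [Fintype V] [Fintype E] [Fintype L]

open scoped Classical

/-- rotate by 90 degrees: `d^⊥`. -/
def perp (d : ℝ × ℝ) : ℝ × ℝ := (-d.2, d.1)

/-- The rows of the realization matrix determined by data `(d, nl)`. -/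
noncomputable def grow (G : LGraph V E L) (d : E → ℝ × ℝ) (nl : L → ℝ × ℝ) :
    E ⊕ L → (V → ℝ × ℝ)
  | .inl e => Pi.single (G.ends e).1 (perp (d e)) - Pi.single (G.ends e).2 (perp (d e))
  | .inr l => Pi.single (G.loopAt l) (nl l)

theorem exists_good_data (G : LGraph V E L)
    (hs1 : ∀ S : Finset V, G.edgeCount S ≤ 2 * S.card - 2)
    (hs2 : ∀ S : Finset V, G.edgeCount S + G.loopCount S ≤ 2 * S.card)
    (hmc : Fintype.card E + Fintype.card L = 2 * Fintype.card V) :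
    ∃ (d : E → ℝ × ℝ) (nl : L → ℝ × ℝ),
      Submodule.span ℝ (Set.range (grow G d nl)) = ⊤ := by
  obtain ⟨v, hvW, hvind⟩ := rado_aux _ (Wfam G) rfl (Wfam_finrank_le G)
    (hall_Wfam G hs1 hs2)
  -- extract the data
  have hed : ∀ e : E, ∃ de : ℝ × ℝ, v (.inl e)
      = Pi.single (G.ends e).1 (perp de) - Pi.single (G.ends e).2 (perp de) := by
    intro e
    obtain ⟨δ, hδ⟩ := hvW (.inl e)
    refine ⟨(δ.2, -δ.1), ?_⟩
    have hperp : perp ((δ.2, -δ.1) : ℝ × ℝ) = δ := by simp [perp]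
    rw [hperp, ← hδ]
    rfl
  have hlp : ∀ l : L, ∃ nl : ℝ × ℝ, v (.inr l) = Pi.single (G.loopAt l) nl := by
    intro l
    obtain ⟨δ, hδ⟩ := hvW (.inr l)
    exact ⟨δ, hδ.symm⟩
  choose d hd using hed
  choose nl hnl using hlp
  refine ⟨d, nl, ?_⟩
  have hvg : grow G d nl = v := by
    funext t
    cases t with
    | inl e => exact (hd e).symm
    | inr l => exact (hnl l).symm
  rw [hvg]
  apply hvind.span_eq_top_of_card_eq_finrank'
  rw [finrank_pi_prod V]
  simp [Fintype.card_sum, hmc]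

end Realize

section MatrixPart

variable {V E L : Type} [Fintype V] [Fintype E] [Fintype L]

open scoped Classical

/-- The symbolic augmented matrix entries of a looped graph. -/
noncomputable def symb (G : LGraph V E L) :
    (E ⊕ L) → ((V × Bool) ⊕ Unit) → MvPolynomial ((E ⊕ E) ⊕ (L ⊕ L) ⊕ L) ℝ := fun t k =>
  match t, k with
  | .inl e, .inl vb =>
      ((if vb.1 = (G.ends e).1 then 1 else 0) - (if vb.1 = (G.ends e).2 then 1 else 0))
        * (if vb.2 then X (.inl (.inl e)) else - X (.inl (.inr e)))
  | .inl _, .inr _ => 0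
  | .inr l, .inl vb =>
      (if vb.1 = G.loopAt l then 1 else 0)
        * (if vb.2 then X (.inr (.inl (.inr l))) else X (.inr (.inl (.inl l))))
  | .inr l, .inr _ => - X (.inr (.inr l))

/-- The coordinate vector associated to a candidate solution. -/
def wvec (p : V → ℝ × ℝ) (τ : ℝ) : (V × Bool) ⊕ Unit → ℝ :=
  Sum.elim (fun vb => if vb.2 then (p vb.1).2 else (p vb.1).1) (fun _ => τ)

theorem rowsum_edge (G : LGraph V E L) (x : (E → ℝ × ℝ) × (L → ℝ × ℝ) × (L → ℝ))
    (p : V → ℝ × ℝ) (τ : ℝ) (e : E) :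
    ∑ k : (V × Bool) ⊕ Unit,
        eval (sliderCoords x) (symb G (.inl e) k) * wvec p τ k
      = pcross (x.1 e) (p (G.ends e).1 - p (G.ends e).2) := by
  rw [Fintype.sum_sum_type]
  rw [Fintype.sum_prod_type]
  have hunit : ∑ k : Unit,
      eval (sliderCoords x) (symb G (.inl e) (.inr k)) * wvec p τ (.inr k) = 0 := by
    simp [symb, wvec]
  rw [hunit, add_zero]
  have hbool : ∀ v : V, ∑ b : Bool,
      eval (sliderCoords x) (symb G (.inl e) (.inl (v, b))) * wvec p τ (.inl (v, b))
      = ((if v = (G.ends e).1 then (1:ℝ) else 0) - (if v = (G.ends e).2 then 1 else 0))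
        * ((x.1 e).1 * (p v).2 - (x.1 e).2 * (p v).1) := by
    intro v
    rw [Fintype.sum_bool]
    simp only [symb, wvec, Sum.elim_inl, if_true, if_false]
    simp [sliderCoords, map_mul, map_sub]
    ring
  rw [Finset.sum_congr rfl (fun v _ => hbool v)]
  simp only [sub_mul, ite_mul, one_mul, zero_mul, Finset.sum_sub_distrib,
    Finset.sum_ite_eq' Finset.univ, Finset.mem_univ, if_true]
  simp [pcross]
  ring

theorem rowsum_loop (G : LGraph V E L) (x : (E → ℝ × ℝ) × (L → ℝ × ℝ) × (L → ℝ))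
    (p : V → ℝ × ℝ) (τ : ℝ) (l : L) :
    ∑ k : (V × Bool) ⊕ Unit,
        eval (sliderCoords x) (symb G (.inr l) k) * wvec p τ k
      = pdot (p (G.loopAt l)) (x.2.1 l) - x.2.2 l * τ := by
  rw [Fintype.sum_sum_type]
  rw [Fintype.sum_prod_type]
  have hunit : ∑ k : Unit,
      eval (sliderCoords x) (symb G (.inr l) (.inr k)) * wvec p τ (.inr k)
      = - (x.2.2 l * τ) := by
    simp [symb, wvec, sliderCoords]
  rw [hunit]
  have hbool : ∀ v : V, ∑ b : Bool,
      eval (sliderCoords x) (symb G (.inr l) (.inl (v, b))) * wvec p τ (.inl (v, b))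
      = (if v = G.loopAt l then (1:ℝ) else 0)
        * ((x.2.1 l).1 * (p v).1 + (x.2.1 l).2 * (p v).2) := by
    intro v
    rw [Fintype.sum_bool]
    simp only [symb, wvec, Sum.elim_inl, if_true, if_false]
    by_cases h : v = G.loopAt l <;> simp [h, sliderCoords] <;> ring
  rw [Finset.sum_congr rfl (fun v _ => hbool v)]
  simp only [ite_mul, one_mul, zero_mul, Finset.sum_ite_eq' Finset.univ, Finset.mem_univ, if_true]
  simp [pdot]
  ring

end MatrixPart

section Topology

variable {E L : Type} [Fintype E] [Fintype L]

theorem cont_evalSlider (q : MvPolynomial ((E ⊕ E) ⊕ (L ⊕ L) ⊕ L) ℝ) :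
    Continuous fun x : (E → ℝ × ℝ) × (L → ℝ × ℝ) × (L → ℝ) =>
      eval (sliderCoords x) q := by
  induction q using MvPolynomial.induction_on with
  | C a => simpa using continuous_const
  | add p q hp hq => simp only [map_add]; exact hp.add hq
  | mul_X p k hp =>
    simp only [map_mul, eval_X]
    refine hp.mul ?_
    rcases k with (e | e) | (l | l) | l <;> · simp only [sliderCoords, Sum.elim_inl, Sum.elim_inr]; fun_prop

theorem slider_line (x y : (E → ℝ × ℝ) × (L → ℝ × ℝ) × (L → ℝ)) (t : ℝ)
    (k : (E ⊕ E) ⊕ (L ⊕ L) ⊕ L) :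
    sliderCoords (x + t • y) k = sliderCoords x k + sliderCoords y k * t := by
  rcases k with (e | e) | (l | l) | l <;>
    simp [sliderCoords, Prod.fst_add, Prod.snd_add, mul_comm]

theorem line_poly (x y : (E → ℝ × ℝ) × (L → ℝ × ℝ) × (L → ℝ))
    (q : MvPolynomial ((E ⊕ E) ⊕ (L ⊕ L) ⊕ L) ℝ) (t : ℝ) :
    Polynomial.eval t (MvPolynomial.eval₂ (Polynomial.C)
      (fun k => Polynomial.C (sliderCoords x k) + Polynomial.C (sliderCoords y k) * Polynomial.X) q)
    = eval (sliderCoords (x + t • y)) q := by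
  have hh : (Polynomial.evalRingHom t).comp
      (MvPolynomial.eval₂Hom (Polynomial.C : ℝ →+* Polynomial ℝ)
        (fun k => Polynomial.C (sliderCoords x k) + Polynomial.C (sliderCoords y k) * Polynomial.X))
      = (eval (sliderCoords (x + t • y)) :
          MvPolynomial ((E ⊕ E) ⊕ (L ⊕ L) ⊕ L) ℝ →+* ℝ) := by
    apply MvPolynomial.ringHom_ext
    · intro r
      simp
    · intro k
      simp [slider_line]
  have h2 := DFunLike.congr_fun hh q
  simpa only [RingHom.comp_apply, MvPolynomial.coe_eval₂Hom, Polynomial.coe_evalRingHom]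
    using h2

end Topology

/-- **One extra loop on a looped-(2,2) graph makes the system generically
unsolvable.** -/
theorem addLoop_generically_unsolvable
    {V E L : Type} [Fintype V] [Fintype E] [Fintype L]
    (G : LGraph V E L) (h22 : G.IsLooped22) (v0 : V) :
    (∃ f : MvPolynomial ((E ⊕ E) ⊕ (Option L ⊕ Option L) ⊕ Option L) ℝ,
      f ≠ 0 ∧
      {x : (E → ℝ × ℝ) × (Option L → ℝ × ℝ) × (Option L → ℝ) |
          ∃ p : V → ℝ × ℝ, IsSSol (G.addLoop v0) x.1 x.2.1 x.2.2 p} ⊆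
        {x | eval (sliderCoords x) f = 0}) ∧
    ∃ U : Set ((E → ℝ × ℝ) × (Option L → ℝ × ℝ) × (Option L → ℝ)),
      IsOpen U ∧ Dense U ∧
      U ⊆ {x | ¬ ∃ p : V → ℝ × ℝ, IsSSol (G.addLoop v0) x.1 x.2.1 x.2.2 p} := by
  classical
  obtain ⟨hs1, hs2, hmc⟩ := h22
  set G' := G.addLoop v0 with hG'
  have hcard : Fintype.card (E ⊕ Option L) = Fintype.card ((V × Bool) ⊕ Unit) := by
    simp only [Fintype.card_sum, Fintype.card_option, Fintype.card_prod, Fintype.card_bool,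
      Fintype.card_unit]
    omega
  set g : (E ⊕ Option L) ≃ ((V × Bool) ⊕ Unit) := Fintype.equivOfCardEq hcard with hg
  set Mp : Matrix (E ⊕ Option L) (E ⊕ Option L)
      (MvPolynomial ((E ⊕ E) ⊕ (Option L ⊕ Option L) ⊕ Option L) ℝ) :=
    Matrix.of (fun t u => symb G' t (g u)) with hMp
  set f := Mp.det with hf
  -- mulVec computation
  have hmul : ∀ (x : (E → ℝ × ℝ) × (Option L → ℝ × ℝ) × (Option L → ℝ))
      (p : V → ℝ × ℝ) (τ : ℝ) (t : E ⊕ Option L),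
      (Mp.map (eval (sliderCoords x))).mulVec (fun u => wvec p τ (g u)) t
        = Sum.elim (fun e => pcross (x.1 e) (p (G.ends e).1 - p (G.ends e).2))
            (fun l => pdot (p (G'.loopAt l)) (x.2.1 l) - x.2.2 l * τ) t := by
    intro x p τ t
    have h1 : (Mp.map (eval (sliderCoords x))).mulVec (fun u => wvec p τ (g u)) t
        = ∑ u : E ⊕ Option L, eval (sliderCoords x) (symb G' t (g u)) * wvec p τ (g u) := rfl
    rw [h1, Equiv.sum_comp g
      (fun k => eval (sliderCoords x) (symb G' t k) * wvec p τ k)]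
    cases t with
    | inl e => exact rowsum_edge G' x p τ e
    | inr l => exact rowsum_loop G' x p τ l
  -- inclusion of the solvable set into the zero set
  have hincl : ∀ x : (E → ℝ × ℝ) × (Option L → ℝ × ℝ) × (Option L → ℝ),
      (∃ p : V → ℝ × ℝ, IsSSol G' x.1 x.2.1 x.2.2 p) → eval (sliderCoords x) f = 0 := by
    rintro x ⟨p, hp⟩
    have hdet : (Mp.map (eval (sliderCoords x))).det = 0 := by
      rw [← Matrix.exists_mulVec_eq_zero_iff]
      refine ⟨fun u => wvec p 1 (g u), ?_, ?_⟩
      · intro h0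
        have h1 := congrFun h0 (g.symm (.inr ()))
        simp only [Equiv.apply_symm_apply, wvec, Sum.elim_inr, Pi.zero_apply] at h1
        exact one_ne_zero h1
      · funext t
        rw [hmul x p 1 t]
        cases t with
        | inl e => exact hp.1 e
        | inr l =>
          have := hp.2 l
          simp [this]
    rw [hf, RingHom.map_det (eval (sliderCoords x)) Mp, RingHom.mapMatrix_apply]
    exact hdet
  -- a data point where the determinant does not vanish
  obtain ⟨d, nl, hspan⟩ := exists_good_data G hs1 hs2 hmc
  set x1 : (E → ℝ × ℝ) × (Option L → ℝ × ℝ) × (Option L → ℝ) :=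
    (d, fun ol => (match ol with | none => (0, 0) | some l => nl l),
        fun ol => (match ol with | none => 1 | some _ => 0)) with hx1
  have hx1ne : eval (sliderCoords x1) f ≠ 0 := by
    rw [hf, RingHom.map_det (eval (sliderCoords x1)) Mp, RingHom.mapMatrix_apply]
    rw [Ne, ← Matrix.exists_mulVec_eq_zero_iff]
    rintro ⟨w, hwne, hw0⟩
    apply hwne
    set p : V → ℝ × ℝ :=
      fun v => (w (g.symm (.inl (v, false))), w (g.symm (.inl (v, true)))) with hpdef
    set τ : ℝ := w (g.symm (.inr ())) with hτdef
    have hwk : ∀ k : (V × Bool) ⊕ Unit, w (g.symm k) = wvec p τ k := by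
      rintro (⟨v, b⟩ | ⟨⟩)
      · cases b
        · rfl
        · rfl
      · rfl
    have hw : w = fun u => wvec p τ (g u) := by
      funext u
      calc w u = w (g.symm (g u)) := by rw [Equiv.symm_apply_apply]
      _ = wvec p τ (g u) := hwk (g u)
    rw [hw] at hw0
    have heq : ∀ t : E ⊕ Option L,
        Sum.elim (fun e => pcross (x1.1 e) (p (G.ends e).1 - p (G.ends e).2))
          (fun l => pdot (p (G'.loopAt l)) (x1.2.1 l) - x1.2.2 l * τ) t = 0 := by
      intro t
      rw [← hmul x1 p τ t, hw0]
      rfl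
    have hτ0 : τ = 0 := by
      have h1 := heq (.inr none)
      simp only [Sum.elim_inr, hx1] at h1
      simp [pdot] at h1
      exact h1
    -- the pairing with p kills all rows
    have hB : ∀ t : E ⊕ L, ∑ v : V, pdot (grow G d nl t v) (p v) = 0 := by
      intro t
      cases t with
      | inl e =>
        have h1 := heq (.inl e)
        simp only [Sum.elim_inl] at h1
        have h2 : ∑ v : V, pdot (grow G d nl (.inl e) v) (p v)
            = pdot (perp (d e)) (p (G.ends e).1) - pdot (perp (d e)) (p (G.ends e).2) := by
          simp only [grow, Pi.sub_apply]
          have hsub : ∀ v : V, pdot ((Pi.single (G.ends e).1 (perp (d e)) : V → ℝ × ℝ) v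
                - (Pi.single (G.ends e).2 (perp (d e)) : V → ℝ × ℝ) v) (p v)
              = pdot ((Pi.single (G.ends e).1 (perp (d e)) : V → ℝ × ℝ) v) (p v)
                - pdot ((Pi.single (G.ends e).2 (perp (d e)) : V → ℝ × ℝ) v) (p v) := by
            intro v
            simp [pdot]
            ring
          rw [Finset.sum_congr rfl fun v _ => hsub v, Finset.sum_sub_distrib]
          have hone : ∀ (a : V) (δ : ℝ × ℝ),
              ∑ v : V, pdot ((Pi.single a δ : V → ℝ × ℝ) v) (p v) = pdot δ (p a) := by
            intro a δ
            rw [Finset.sum_eq_single a]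
            · rw [Pi.single_eq_same]
            · intro b _ hb
              rw [Pi.single_eq_of_ne hb]
              simp [pdot]
            · intro h; exact absurd (Finset.mem_univ a) h
          rw [hone, hone]
        rw [h2]
        have h3 : pdot (perp (d e)) (p (G.ends e).1) - pdot (perp (d e)) (p (G.ends e).2)
            = pcross (d e) (p (G.ends e).1 - p (G.ends e).2) := by
          simp [pdot, pcross, perp]
          ring
        rw [h3]
        simpa using h1
      | inr l =>
        have h1 := heq (.inr (some l))
        simp only [Sum.elim_inr, hx1] at h1
        have h2 : ∑ v : V, pdot (grow G d nl (.inr l) v) (p v)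
            = pdot (nl l) (p (G.loopAt l)) := by
          simp only [grow]
          rw [Finset.sum_eq_single (G.loopAt l)]
          · rw [Pi.single_eq_same]
          · intro b _ hb
            rw [Pi.single_eq_of_ne hb]
            simp [pdot]
          · intro h; exact absurd (Finset.mem_univ _) h
        rw [h2]
        have h1' : pdot (p (G.loopAt l)) (nl l) = 0 := by
          exact (by simpa using h1 : pdot (p (G'.loopAt (some l))) (nl l) = 0)
        simp only [pdot] at h1' ⊢
        linarith
    -- hence p = 0 by spanning
    set Φ : (V → ℝ × ℝ) →ₗ[ℝ] ℝ :=
      { toFun := fun q => ∑ v : V, pdot (q v) (p v)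
        map_add' := by
          intro a b
          rw [← Finset.sum_add_distrib]
          refine Finset.sum_congr rfl fun v _ => ?_
          simp [pdot]; ring
        map_smul' := by
          intro c a
          rw [RingHom.id_apply, Finset.smul_sum]
          refine Finset.sum_congr rfl fun v _ => ?_
          simp [pdot]; ring } with hΦ
    have hΦ0 : ∀ q : V → ℝ × ℝ, Φ q = 0 := by
      have hle : Submodule.span ℝ (Set.range (grow G d nl)) ≤ LinearMap.ker Φ := by
        rw [Submodule.span_le]
        rintro _ ⟨t, rfl⟩
        exact LinearMap.mem_ker.mpr (hB t)
      rw [hspan] at hle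
      intro q
      exact LinearMap.mem_ker.mp (hle Submodule.mem_top)
    have hp0 : ∀ v : V, p v = 0 := by
      intro v
      have h1 := hΦ0 (Pi.single v ((1 : ℝ), (0 : ℝ)))
      have h2 := hΦ0 (Pi.single v ((0 : ℝ), (1 : ℝ)))
      have hone : ∀ (δ : ℝ × ℝ), ∑ u : V, pdot ((Pi.single v δ : V → ℝ × ℝ) u) (p u)
          = pdot δ (p v) := by
        intro δ
        rw [Finset.sum_eq_single v]
        · rw [Pi.single_eq_same]
        · intro b _ hb
          rw [Pi.single_eq_of_ne hb]
          simp [pdot]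
        · intro h; exact absurd (Finset.mem_univ _) h
      rw [hΦ] at h1 h2
      simp only [LinearMap.coe_mk, AddHom.coe_mk] at h1 h2
      rw [hone] at h1 h2
      simp [pdot] at h1 h2
      ext
      · exact h1
      · exact h2
    have hz : ∀ k : (V × Bool) ⊕ Unit, wvec p τ k = 0 := by
      rintro (⟨v, b⟩ | ⟨⟩)
      · cases b
        · show (p v).1 = 0
          rw [hp0 v]; rfl
        · show (p v).2 = 0
          rw [hp0 v]; rfl
      · exact hτ0
    rw [hw]
    funext u
    exact hz (g u)
  -- assemble
  constructor
  · exact ⟨f, fun h0 => by rw [h0] at hx1ne; simp at hx1ne,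
      fun x hx => hincl x hx⟩
  · refine ⟨{x | eval (sliderCoords x) f ≠ 0}, ?_, ?_, ?_⟩
    · have : {x : (E → ℝ × ℝ) × (Option L → ℝ × ℝ) × (Option L → ℝ) |
          eval (sliderCoords x) f ≠ 0}
          = (fun x => eval (sliderCoords x) f) ⁻¹' ({0}ᶜ) := rfl
      rw [this]
      exact IsOpen.preimage (cont_evalSlider f) isOpen_compl_singleton
    · -- density
      rw [Metric.dense_iff]
      intro x0 r hr
      set y := x1 - x0 with hy
      set q1 : Polynomial ℝ := MvPolynomial.eval₂ (Polynomial.C)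
        (fun k => Polynomial.C (sliderCoords x0 k)
          + Polynomial.C (sliderCoords y k) * Polynomial.X) f with hq1def
      have hq1 : ∀ t : ℝ, Polynomial.eval t q1 = eval (sliderCoords (x0 + t • y)) f :=
        fun t => line_poly x0 y f t
      have hq1ne : q1 ≠ 0 := by
        intro h0
        have h1 := hq1 1
        rw [h0] at h1
        simp only [Polynomial.eval_zero] at h1
        rw [one_smul, hy, add_sub_cancel] at h1
        exact hx1ne h1.symm
      have hroots := Polynomial.finite_setOf_isRoot hq1ne
      have hIoo : Set.Infinite (Set.Ioo (0 : ℝ) (r / (‖y‖ + 1))) :=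
        Set.Ioo_infinite (by positivity)
      obtain ⟨t, ht⟩ := (hIoo.diff hroots).nonempty
      obtain ⟨⟨ht0, htlt⟩, htroot⟩ := ht
      refine ⟨x0 + t • y, ?_, ?_⟩
      · rw [Metric.mem_ball, dist_eq_norm, add_sub_cancel_left, norm_smul, Real.norm_eq_abs]
        have hyn : ‖y‖ ≥ 0 := norm_nonneg _
        rw [abs_of_pos ht0]
        have h1 : t * ‖y‖ < (r / (‖y‖ + 1)) * (‖y‖ + 1) := by
          have h2 : t * ‖y‖ ≤ t * (‖y‖ + 1) := by nlinarith
          have h3 : t * (‖y‖ + 1) < (r / (‖y‖ + 1)) * (‖y‖ + 1) := by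
            have : (0:ℝ) < ‖y‖ + 1 := by positivity
            exact mul_lt_mul_of_pos_right htlt this
          linarith
        rw [div_mul_cancel₀] at h1
        · exact h1
        · positivity
      · show eval (sliderCoords (x0 + t • y)) f ≠ 0
        rw [← hq1 t]
        exact htroot
    · intro x hx hsol
      exact hx (hincl x hsol)
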